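/- arXiv:1608.00874 — 2 statements merged into one kernel-verified Lean document; each statement's English description precedes it below -/
import Mathlib

section
/- Let D ⊆ ℝ^p be measurable, φ : D → ℝ with φ(x) ≥ 0 and ∫_D φ(x) dx < ∞, κ a probability density on D, C > 0 with φ(x)/κ(x) < C for all x ∈ D, and a > 1. Let K ~ Poisson(aC) and x_1, x_2, … i.i.d. with density κ, independent of K. Then the estimator L̂_φ = ∏_{i=1}^K (1 - φ(x_i)/(a C κ(x_i))) satisfies E[L̂_φ] = exp(-∫_D φ(x) dx). -/
open MeasureTheory Set ProbabilityTheory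
open scoped NNReal ENNReal

lemma aux_integral_prod_indep {Ω' ι : Type*} [MeasurableSpace Ω'] {μ : Measure Ω'}
    [IsProbabilityMeasure μ] {g : ι → Ω' → ℝ}
    (h : iIndepFun g μ) (hm : ∀ i, Measurable (g i))
    (s : Finset ι) : ∫ ω, ∏ j ∈ s, g j ω ∂μ = ∏ j ∈ s, ∫ ω, g j ω ∂μ := by
  classical
  induction s using Finset.cons_induction with
  | empty => simp
  | cons i s hi ih =>
    have hindep : IndepFun (g i) (∏ j ∈ s, g j) μ :=
      (h.indepFun_finsetProd_of_notMem hm hi).symm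
    have hmul := hindep.integral_mul_eq_mul_integral (hm i).aestronglyMeasurable
      (by
        have : Measurable fun a => ∏ j ∈ s, g j a := s.measurable_prod (fun j _ => hm j)
        have e : (∏ j ∈ s, g j) = fun a => ∏ j ∈ s, g j a := by funext a; simp [Finset.prod_apply]
        rw [e]; exact this.aestronglyMeasurable)
    simp only [Finset.prod_cons]
    have h1 : (∫ ω, g i ω * ∏ j ∈ s, g j ω ∂μ)
        = ∫ ω, (g i * ∏ j ∈ s, g j) ω ∂μ := by
      congr 1; funext ω; simp [Finset.prod_apply]
    have h2 : (∫ ω, (∏ j ∈ s, g j) ω ∂μ) = ∫ ω, ∏ j ∈ s, g j ω ∂μ := by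
      congr 1; funext ω; simp [Finset.prod_apply]
    rw [h1, hmul, h2, ih]

/-- Unbiasedness of the Poisson estimator: with `φ ≥ 0` integrable on `D`, `κ` a
probability density on `D`, `φ/κ < C`, `a > 1`, `K ~ Poisson(aC)` and `x₁, x₂, …`
i.i.d. with density `κ`, all independent, the estimator
`L̂_φ = ∏_{i=1}^K (1 - φ(xᵢ)/(aCκ(xᵢ)))` satisfies `E[L̂_φ] = exp(-∫_D φ)`. -/
theorem poisson_estimator_unbiased {p : ℕ}
    (D : Set (EuclideanSpace ℝ (Fin p))) (hD : MeasurableSet D)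
    (φ κ : EuclideanSpace ℝ (Fin p) → ℝ)
    (hφmeas : Measurable φ) (hκmeas : Measurable κ)
    (hφ0 : ∀ x ∈ D, 0 ≤ φ x) (hφint : IntegrableOn φ D)
    (hκ0 : ∀ x ∈ D, 0 < κ x) (hκ1 : (∫ x in D, κ x) = 1)
    (C : ℝ) (hC : 0 < C) (hCb : ∀ x ∈ D, φ x / κ x < C)
    (a : ℝ) (ha : 1 < a)
    {Ω : Type*} [MeasureSpace Ω] [IsProbabilityMeasure (ℙ : Measure Ω)]
    (K : Ω → ℕ) (X : ℕ → Ω → EuclideanSpace ℝ (Fin p))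
    (hKmeas : Measurable K) (hXmeas : ∀ i, Measurable (X i))
    (hK : ∀ k : ℕ, (ℙ : Measure Ω) {ω | K ω = k}
      = ENNReal.ofReal (Real.exp (-(a * C)) * (a * C) ^ k / (Nat.factorial k : ℝ)))
    (hX : ∀ i, Measure.map (X i) ℙ
      = (volume.restrict D).withDensity (fun x => ENNReal.ofReal (κ x)))
    (hindep : iIndepFun
      (β := fun j : Unit ⊕ ℕ =>
        match j with
        | Sum.inl _ => ℕ
        | Sum.inr _ => EuclideanSpace ℝ (Fin p))
      (m := fun j : Unit ⊕ ℕ =>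
        match j with
        | Sum.inl _ => (inferInstance : MeasurableSpace ℕ)
        | Sum.inr _ => (inferInstance : MeasurableSpace (EuclideanSpace ℝ (Fin p))))
      (fun j : Unit ⊕ ℕ =>
        match j with
        | Sum.inl _ => K
        | Sum.inr i => X i) ℙ) :
    (∫ ω, ∏ i ∈ Finset.range (K ω), (1 - φ (X i ω) / (a * C * κ (X i ω))) ∂ℙ)
      = Real.exp (-(∫ x in D, φ x)) := by
  classical
  have ha0 : (0:ℝ) < a := lt_trans one_pos ha
  have haC : (0:ℝ) < a * C := mul_pos ha0 hC
  set f : EuclideanSpace ℝ (Fin p) → ℝ := fun x => 1 - φ x / (a * C * κ x) with hf_def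
  have hfmeas : Measurable f := measurable_const.sub (hφmeas.div (measurable_const.mul hκmeas))
  set I : ℝ := ∫ x in D, φ x with hI_def
  set m : ℝ := 1 - I / (a * C) with hm_def
  show (∫ ω, ∏ i ∈ Finset.range (K ω), f (X i ω) ∂(ℙ : Measure Ω)) = Real.exp (-I)
  -- bounds of f on D
  have hfD : ∀ x ∈ D, 0 ≤ f x ∧ f x ≤ 1 := by
    intro x hx
    have hκx := hκ0 x hx
    have hq0 : 0 ≤ φ x / (a * C * κ x) :=
      div_nonneg (hφ0 x hx) (le_of_lt (mul_pos haC hκx))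
    have hq1 : φ x / (a * C * κ x) ≤ 1 := by
      rw [div_le_one (mul_pos haC hκx)]
      have h1 : φ x < C * κ x := (div_lt_iff₀ hκx).mp (hCb x hx)
      have h2 : 0 < (a - 1) * (C * κ x) := mul_pos (sub_pos.mpr ha) (mul_pos hC hκx)
      nlinarith
    constructor <;> simp only [hf_def] <;> linarith
  -- a.e. each X i lands in D
  have hlawD : ∀ᵐ ω ∂(ℙ : Measure Ω), ∀ i, X i ω ∈ D := by
    rw [ae_all_iff]
    intro i
    have h1 : Measure.map (X i) ℙ Dᶜ = 0 := by
      rw [hX i, withDensity_apply _ hD.compl, Measure.restrict_restrict hD.compl,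
        Set.compl_inter_self, Measure.restrict_empty, lintegral_zero_measure]
    rw [Measure.map_apply (hXmeas i) hD.compl] at h1
    exact (ae_iff.2 h1)
  -- law is a probability measure; κ integrable on D
  have hlawP : IsProbabilityMeasure
      ((volume.restrict D).withDensity fun x => ENNReal.ofReal (κ x)) := by
    rw [← hX 0]; exact Measure.isProbabilityMeasure_map (hXmeas 0).aemeasurable
  have hκlint : (∫⁻ x, ENNReal.ofReal (κ x) ∂(volume.restrict D)) = 1 := by
    have h1 := hlawP.measure_univ
    rwa [withDensity_apply _ MeasurableSet.univ, Measure.restrict_univ] at h1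
  have hκint : IntegrableOn κ D := by
    have h1 : Integrable (fun x => (ENNReal.ofReal (κ x)).toReal) (volume.restrict D) :=
      integrable_toReal_of_lintegral_ne_top
        (ENNReal.measurable_ofReal.comp hκmeas).aemeasurable
        (by rw [hκlint]; exact ENNReal.one_ne_top)
    refine h1.congr ?_
    filter_upwards [ae_restrict_mem hD] with x hx
    rw [ENNReal.toReal_ofReal (le_of_lt (hκ0 x hx))]
  -- single-factor expectation
  have hsingle : ∀ i, (∫ ω, f (X i ω) ∂(ℙ : Measure Ω)) = m := by
    intro i
    rw [← integral_map (hXmeas i).aemeasurable hfmeas.aestronglyMeasurable, hX i]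
    have hden : (fun x => ENNReal.ofReal (κ x))
        = fun x => ((Real.toNNReal (κ x) : ℝ≥0) : ℝ≥0∞) := rfl
    rw [hden, integral_withDensity_eq_integral_smul
      (f := fun x => Real.toNNReal (κ x))
      (show Measurable fun x => Real.toNNReal (κ x) from measurable_real_toNNReal.comp hκmeas) f]
    have heq : EqOn (fun x => (Real.toNNReal (κ x) : ℝ≥0) • f x)
        (fun x => κ x - φ x / (a * C)) D := by
      intro x hx
      have hκx := hκ0 x hx
      have hκne : κ x ≠ 0 := ne_of_gt hκx
      have haCne : a * C ≠ 0 := ne_of_gt haC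
      simp only [NNReal.smul_def, Real.coe_toNNReal _ (le_of_lt hκx), hf_def]
      field_simp
      rw [smul_eq_mul]; field_simp
    rw [setIntegral_congr_fun hD heq,
      integral_sub hκint (hφint.div_const (a * C)), integral_div, hκ1, ← hI_def, hm_def]
  -- per-k set integral
  have hPk : ∀ k : ℕ, (∫ ω in {ω | K ω = k}, (∏ i ∈ Finset.range k, f (X i ω)) ∂ℙ)
      = ((ℙ : Measure Ω) {ω | K ω = k}).toReal * m ^ k := by
    intro k
    have hKk : MeasurableSet {ω | K ω = k} := hKmeas (measurableSet_singleton k)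
    set G : (Unit ⊕ ℕ) → Ω → ℝ := fun j => match j with
      | Sum.inl _ => fun ω => if K ω = k then (1:ℝ) else 0
      | Sum.inr i => fun ω => f (X i ω) with hG_def
    have hGmeas : ∀ j, Measurable (G j) := by
      rintro (⟨⟩|i)
      · exact (measurable_from_top (f := fun n : ℕ => if n = k then (1:ℝ) else 0)).comp hKmeas
      · exact hfmeas.comp (hXmeas i)
    have hGindep : iIndepFun G ℙ := by
      let g' : ∀ j : Unit ⊕ ℕ, (match j with
          | Sum.inl _ => ℕ
          | Sum.inr _ => EuclideanSpace ℝ (Fin p)) → ℝ := fun j => match j with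
        | Sum.inl _ => fun n : ℕ => if n = k then (1:ℝ) else 0
        | Sum.inr _ => f
      have hcomp := hindep.comp g' (fun j => match j with
        | Sum.inl _ => measurable_from_top
        | Sum.inr _ => hfmeas)
      have hGe : G = fun j : Unit ⊕ ℕ => g' j ∘ (match (motive :=
          (j : Unit ⊕ ℕ) → Ω → (match j with
            | Sum.inl _ => ℕ
            | Sum.inr _ => EuclideanSpace ℝ (Fin p))) j with
          | Sum.inl _ => K
          | Sum.inr i => X i) := by
        funext j; cases j <;> rfl
      rw [hGe]; exact hcomp
    have hnotmem : (Sum.inl () : Unit ⊕ ℕ) ∉ (Finset.range k).image Sum.inr := by simp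
    have key := aux_integral_prod_indep hGindep hGmeas
      (Finset.cons (Sum.inl ()) ((Finset.range k).image Sum.inr) hnotmem)
    -- rewrite LHS of key
    have hL : (∫ ω, ∏ j ∈ Finset.cons (Sum.inl ())
          ((Finset.range k).image Sum.inr) hnotmem, G j ω ∂(ℙ : Measure Ω))
        = ∫ ω in {ω | K ω = k}, (∏ i ∈ Finset.range k, f (X i ω)) ∂ℙ := by
      rw [← integral_indicator hKk]
      congr 1
      funext ω
      rw [Finset.prod_cons, Finset.prod_image (fun x _ y _ h => Sum.inr.inj h)]
      by_cases hω : K ω = k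
      · simp [hG_def, hω, Set.indicator_apply, Set.mem_setOf_eq]
      · simp [hG_def, hω, Set.indicator_apply, Set.mem_setOf_eq]
    -- rewrite RHS of key
    have hR : (∏ j ∈ Finset.cons (Sum.inl ())
          ((Finset.range k).image Sum.inr) hnotmem, ∫ ω, G j ω ∂(ℙ : Measure Ω))
        = ((ℙ : Measure Ω) {ω | K ω = k}).toReal * m ^ k := by
      rw [Finset.prod_cons, Finset.prod_image (fun x _ y _ h => Sum.inr.inj h)]
      have h1 : (∫ ω, G (Sum.inl ()) ω ∂(ℙ : Measure Ω))
          = ((ℙ : Measure Ω) {ω | K ω = k}).toReal := by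
        have he : (fun ω => G (Sum.inl ()) ω)
            = Set.indicator {ω | K ω = k} (fun _ => (1:ℝ)) := by
          funext ω; simp [hG_def, Set.indicator_apply, Set.mem_setOf_eq]
        rw [show (∫ ω, G (Sum.inl ()) ω ∂(ℙ : Measure Ω))
            = ∫ ω, Set.indicator {ω | K ω = k} (fun _ => (1:ℝ)) ω ∂ℙ from by rw [← he],
          integral_indicator_const (1:ℝ) hKk]
        simp [Measure.real]
      have h2 : ∀ i ∈ Finset.range k, (∫ ω, G (Sum.inr i) ω ∂(ℙ : Measure Ω)) = m :=
        fun i _ => hsingle i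
      rw [h1, Finset.prod_congr rfl h2, Finset.prod_const, Finset.card_range]
    rw [← hL, key, hR]
  -- measurability and integrability of the estimator
  have hFmeas : ∀ k : ℕ, Measurable (fun ω => ∏ i ∈ Finset.range k, f (X i ω)) :=
    fun k => Finset.measurable_prod _ fun i _ => hfmeas.comp (hXmeas i)
  have hPmeas : Measurable (fun ω => ∏ i ∈ Finset.range (K ω), f (X i ω)) := by
    intro s hs
    have he : (fun ω => ∏ i ∈ Finset.range (K ω), f (X i ω)) ⁻¹' s
        = ⋃ k : ℕ, ({ω | K ω = k} ∩ (fun ω => ∏ i ∈ Finset.range k, f (X i ω)) ⁻¹' s) := by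
      ext ω
      simp only [Set.mem_preimage, Set.mem_iUnion, Set.mem_inter_iff, Set.mem_setOf_eq]
      constructor
      · intro h; exact ⟨K ω, rfl, h⟩
      · rintro ⟨k, hk, h⟩; rw [hk]; exact h
    rw [he]
    exact MeasurableSet.iUnion fun k =>
      (hKmeas (measurableSet_singleton k)).inter ((hFmeas k) hs)
  have hbound : ∀ᵐ ω ∂(ℙ : Measure Ω), ‖∏ i ∈ Finset.range (K ω), f (X i ω)‖ ≤ 1 := by
    filter_upwards [hlawD] with ω hω
    have h0 : 0 ≤ ∏ i ∈ Finset.range (K ω), f (X i ω) :=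
      Finset.prod_nonneg fun i _ => (hfD _ (hω i)).1
    have h1 : (∏ i ∈ Finset.range (K ω), f (X i ω)) ≤ 1 :=
      Finset.prod_le_one (fun i _ => (hfD _ (hω i)).1) (fun i _ => (hfD _ (hω i)).2)
    rw [Real.norm_eq_abs, abs_of_nonneg h0]; exact h1
  have hintP : Integrable (fun ω => ∏ i ∈ Finset.range (K ω), f (X i ω)) (ℙ : Measure Ω) :=
    Integrable.mono' (integrable_const 1) hPmeas.aestronglyMeasurable hbound
  -- decomposition over the partition {K = k}
  have hcover : (⋃ k : ℕ, {ω | K ω = k}) = Set.univ := by ext ω; simp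
  have hdisj : Pairwise (Function.onFun Disjoint fun k : ℕ => {ω : Ω | K ω = k}) := by
    intro i j hij
    simp only [Function.onFun, Set.disjoint_left, Set.mem_setOf_eq]
    intro ω h1 h2
    exact hij (h1 ▸ h2 ▸ rfl)
  have hdecomp := integral_iUnion (μ := (ℙ : Measure Ω))
    (s := fun k : ℕ => {ω | K ω = k})
    (f := fun ω => ∏ i ∈ Finset.range (K ω), f (X i ω))
    (fun k : ℕ => hKmeas (measurableSet_singleton k)) hdisj
    (by rw [hcover]; exact hintP.integrableOn)
  rw [hcover, setIntegral_univ] at hdecomp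
  rw [hdecomp]
  -- on each piece, replace K ω by k and apply hPk, hK
  have hterm : ∀ k : ℕ, (∫ ω in {ω | K ω = k},
        (∏ i ∈ Finset.range (K ω), f (X i ω)) ∂ℙ)
      = Real.exp (-(a * C)) * (a * C) ^ k / (Nat.factorial k : ℝ) * m ^ k := by
    intro k
    have hKk : MeasurableSet {ω : Ω | K ω = k} := hKmeas (measurableSet_singleton k)
    have hcongr : (∫ ω in {ω | K ω = k}, (∏ i ∈ Finset.range (K ω), f (X i ω)) ∂ℙ)
        = ∫ ω in {ω | K ω = k}, (∏ i ∈ Finset.range k, f (X i ω)) ∂ℙ := by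
      refine setIntegral_congr_fun hKk ?_
      intro ω hω
      have hKω : K ω = k := hω
      simp only [hKω]
    have hnn : 0 ≤ Real.exp (-(a * C)) * (a * C) ^ k / (Nat.factorial k : ℝ) :=
      div_nonneg (mul_nonneg (Real.exp_nonneg _) (pow_nonneg (le_of_lt haC) _))
        (Nat.cast_nonneg _)
    rw [hcongr, hPk k, hK k, ENNReal.toReal_ofReal hnn]
  clear_value I m
  rw [tsum_congr hterm]
  -- sum the series
  have hser : ∀ k : ℕ, Real.exp (-(a * C)) * (a * C) ^ k / (Nat.factorial k : ℝ) * m ^ k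
      = Real.exp (-(a * C)) * ((a * C * m) ^ k / (Nat.factorial k : ℝ)) := by
    intro k; rw [mul_pow]; ring
  rw [tsum_congr hser, tsum_mul_left]
  have hexp : (∑' k : ℕ, (a * C * m) ^ k / (Nat.factorial k : ℝ)) = Real.exp (a * C * m) := by
    rw [Real.exp_eq_exp_ℝ, NormedSpace.exp_eq_tsum_div]
  rw [hexp, ← Real.exp_add]
  congr 1
  have haCne : a * C ≠ 0 := ne_of_gt haC
  rw [hm_def]
  field_simp
  ring
end

section
/- Fix d > 0, c > 0 and L_φ ∈ (0,1]. Define V(N) = (L_φ²/N)(exp{N c / d} - 1) for positive integers N. Then V(N+1) > V(N) for all N ≥ 1; i.e., the variance of the averaged Poisson estimator with fixed total computational budget d is strictly increasing in the number N of averaged replicates, so N = 1 is optimal. -/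
/-- For fixed total budget `d > 0`, `c > 0` and `L_φ ∈ (0,1]`, the variance
`V(N) = (L_φ²/N)(exp(N c/d) - 1)` of the averaged Poisson estimator is strictly
increasing in `N`, so `N = 1` is optimal. -/
theorem averaged_poisson_estimator_variance_increasing
    (d c L : ℝ) (hd : 0 < d) (hc : 0 < c) (hL0 : 0 < L) (hL1 : L ≤ 1)
    (N : ℕ) (hN : 1 ≤ N) :
    (L ^ 2 / N) * (Real.exp (N * c / d) - 1)
      < (L ^ 2 / (N + 1)) * (Real.exp ((N + 1) * c / d) - 1) := by
  set t : ℝ := Real.exp (c / d) with ht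
  have ht1 : 1 < t := by rw [ht]; exact Real.one_lt_exp_iff.mpr (div_pos hc hd)
  have hexp1 : Real.exp (N * c / d) = t ^ N := by
    rw [ht, ← Real.exp_nat_mul]; ring_nf
  have hexp2 : Real.exp ((N + 1) * c / d) = t ^ (N + 1) := by
    rw [ht, ← Real.exp_nat_mul]
    norm_num
    ring_nf
  rw [hexp1, hexp2]
  have hN0 : (0 : ℝ) < N := by exact_mod_cast hN
  have hL2 : (0 : ℝ) < L ^ 2 := by positivity
  rw [div_mul_eq_mul_div, div_mul_eq_mul_div, div_lt_div_iff₀ hN0 (by positivity)]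
  have hkey : (∑ i ∈ Finset.range N, t ^ i) < N * t ^ N := by
    calc (∑ i ∈ Finset.range N, t ^ i) < ∑ i ∈ Finset.range N, t ^ N := by
          apply Finset.sum_lt_sum_of_nonempty (by simp; omega)
          intro i hi
          exact pow_lt_pow_right₀ ht1 (Finset.mem_range.mp hi)
      _ = N * t ^ N := by simp [mul_comm]
  have hgeom : ∀ n : ℕ, t ^ n - 1 = (∑ i ∈ Finset.range n, t ^ i) * (t - 1) :=
    fun n => (geom_sum_mul t n).symm
  have ht0 : 0 < t - 1 := by linarith
  have hS : (∑ i ∈ Finset.range (N + 1), t ^ i)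
      = (∑ i ∈ Finset.range N, t ^ i) + t ^ N := Finset.sum_range_succ _ _
  rw [hgeom N, hgeom (N + 1), hS]
  nlinarith [hkey, hL2, ht0, mul_pos hL2 ht0]
end
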